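/- Let d ≥ 2 be even, λ > 1, and let W be the cyclic half-block channel W(y|x) = (2λ/(d(1+λ)))·1{y ∈ A_x} + (2/(d(1+λ)))·1{y ∉ A_x}, where A_x = {x,…,x+d/2−1} mod d. Fix a and b = a + d/2 (mod d), let n ≥ 1, and let P be the law of the histogram N of n i.i.d. outputs drawn from W(·|a), and Q be the histogram law when one distinguished user's output is drawn from W(·|b) and the remaining n−1 from W(·|a). Set K(N) = ∑_{y ∉ A_a} N y. Then: (i) under P, K has the binomial distribution Bin(n, 1/(1+λ)); and (ii) for every histogram N, Q(N)/P(N) = λ^{-1} + (K(N)/n)(λ − λ^{-1}). Consequently, for every ε ≥ 0, the privacy curve δ(ε) = ∑_N (Q(N) − e^ε P(N))₊ equals ∑_{k=0}^n C(n,k) q^k (1−q)^{n−k} (λ^{-1} + (k/n)(λ − λ^{-1}) − e^ε)₊ with q = 1/(1+λ), which is exactly the binary randomized-response privacy curve. -/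

import Mathlib

open Finset BigOperators
open scoped Classical

/-- **Half-block channel: binomial quotient statistic and the exact privacy curve of
binary randomized response** (Theorem 5.2(iii)–(iv)).  For the cyclic half-block channel,
the opposite pair `b = a + d/2`, `P` and `Q` the two histogram laws, and
`K(N) = ∑_{y ∉ A_a} N_y`: (i) under `P`, `K ∼ Bin(n, 1/(1+λ))`;
(ii) `Q(N)/P(N) = λ⁻¹ + (K(N)/n)(λ − λ⁻¹)`; consequently (iii) for every `ε ≥ 0`
the privacy curve `∑_N (Q(N) − e^ε P(N))₊` equals the binary randomized-response curve
`∑_{k≤n} C(n,k) q^k (1−q)^{n−k} (λ⁻¹ + (k/n)(λ−λ⁻¹) − e^ε)₊` with `q = 1/(1+λ)`. -/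
theorem half_block_privacy_curve (d : ℕ) [NeZero d] (hd : 2 ≤ d) (hdeven : Even d)
    (lam : ℝ) (hlam : 1 < lam) (n : ℕ) (hn : 1 ≤ n)
    (W : ZMod d → ZMod d → ℝ)
    (hW : ∀ x y : ZMod d, W x y =
        if (y - x).val < d / 2 then 2 * lam / (d * (1 + lam)) else 2 / (d * (1 + lam)))
    (a b : ZMod d) (hb : b = a + ((d / 2 : ℕ) : ZMod d))
    (H : Finset (ZMod d → ℕ))
    (hH : H = (Fintype.piFinset fun _ : ZMod d => Finset.range (n + 1)).filter
        (fun N => ∑ y, N y = n))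
    (P Q : (ZMod d → ℕ) → ℝ)
    (hP : ∀ N, P N = (Nat.factorial n : ℝ) / ((∏ y, Nat.factorial (N y) : ℕ) : ℝ) *
        ∏ y, (W a y) ^ (N y))
    (hQ : ∀ N, Q N = ∑ z, W b z * (if N z = 0 then 0 else
        (Nat.factorial (n - 1) : ℝ) /
          (((Nat.factorial (N z - 1) * ∏ y ∈ Finset.univ.erase z, Nat.factorial (N y)) : ℕ) : ℝ) *
          (W a z) ^ (N z - 1) * ∏ y ∈ Finset.univ.erase z, (W a y) ^ (N y)))
    (K : (ZMod d → ℕ) → ℕ)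
    (hK : ∀ N, K N = ∑ y ∈ Finset.univ.filter (fun y : ZMod d => ¬ (y - a).val < d / 2), N y)
    (qq : ℝ) (hqq : qq = 1 / (1 + lam)) :
    -- (i) under P, K is Bin(n, 1/(1+λ))
    (∀ k ≤ n, ∑ N ∈ H.filter (fun N => K N = k), P N
        = (n.choose k : ℝ) * qq ^ k * (1 - qq) ^ (n - k))
    -- (ii) exact likelihood ratio
    ∧ (∀ N ∈ H, Q N / P N = lam⁻¹ + ((K N : ℝ) / n) * (lam - lam⁻¹))
    -- (iii) exact privacy curve = binary randomized response curve
    ∧ (∀ ε : ℝ, 0 ≤ ε →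
        ∑ N ∈ H, max (Q N - Real.exp ε * P N) 0
          = ∑ k ∈ Finset.range (n + 1), (n.choose k : ℝ) * qq ^ k * (1 - qq) ^ (n - k) *
              max (lam⁻¹ + ((k : ℝ) / n) * (lam - lam⁻¹) - Real.exp ε) 0) := by
  classical
  have hm2 : d / 2 + d / 2 = d := by obtain ⟨t, ht⟩ := hdeven; omega
  set m : ℕ := d / 2 with hmdef
  have hm1 : 1 ≤ m := by omega
  have hmd : m < d := by omega
  have hlam0 : (0:ℝ) < lam := lt_trans one_pos hlam
  have h1lam : (0:ℝ) < 1 + lam := by linarith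
  have hdR : (0:ℝ) < (d:ℝ) := by exact_mod_cast (by omega : 0 < d)
  set c : ℝ := 2 / (d * (1 + lam)) with hcdef
  have hc : 0 < c := by positivity
  have hWa : ∀ y, W a y = if (y - a).val < m then lam * c else c := by
    intro y; rw [hW]
    split
    · rw [hcdef]; ring
    · rfl
  -- cardinalities
  have hcardin : (univ.filter fun y : ZMod d => (y - a).val < m).card = m := by
    have h : (univ.filter fun y : ZMod d => (y - a).val < m).card = (Finset.range m).card := by
      apply Finset.card_nbij (fun y => (y - a).val)
      · intro y hy
        simpa using hy
      · intro y _ y' _ h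
        have := ZMod.val_injective d h
        exact sub_left_injective this
      · intro j hj
        simp only [Finset.coe_range, Set.mem_Iio] at hj
        refine ⟨a + (j : ZMod d), ?_, ?_⟩
        · simp only [Finset.coe_filter, Set.mem_setOf_eq, mem_univ, true_and]
          rw [add_sub_cancel_left, ZMod.val_natCast_of_lt (by omega)]
          exact hj
        · show ((a + (j : ZMod d)) - a).val = j
          rw [add_sub_cancel_left, ZMod.val_natCast_of_lt (by omega)]
    rw [h, Finset.card_range]
  have hcardout : (univ.filter fun y : ZMod d => ¬ (y - a).val < m).card = m := by
    have h := Finset.card_filter_add_card_filter_not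
      (s := (univ : Finset (ZMod d))) (p := fun y => (y - a).val < m)
    rw [hcardin] at h
    have hcu : (univ : Finset (ZMod d)).card = d := by
      rw [Finset.card_univ, ZMod.card]
    omega
  have hdm : (d:ℝ) = 2 * m := by exact_mod_cast (by omega : d = 2 * m)
  have hm0 : (0:ℝ) < (m:ℝ) := by exact_mod_cast hm1
  have hsumout : ∑ y ∈ univ.filter (fun y : ZMod d => ¬ (y - a).val < m), W a y = qq := by
    have h1 : ∀ y ∈ univ.filter (fun y : ZMod d => ¬ (y - a).val < m), W a y = c :=
      fun y hy => by rw [hWa, if_neg (mem_filter.mp hy).2]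
    rw [Finset.sum_congr rfl h1, Finset.sum_const, hcardout, nsmul_eq_mul, hcdef, hdm, hqq]
    field_simp
    try exact Or.inl (by ring)
  have hsumin : ∑ y ∈ univ.filter (fun y : ZMod d => (y - a).val < m), W a y = 1 - qq := by
    have h1 : ∀ y ∈ univ.filter (fun y : ZMod d => (y - a).val < m), W a y = lam * c :=
      fun y hy => by rw [hWa, if_pos (mem_filter.mp hy).2]
    rw [Finset.sum_congr rfl h1, Finset.sum_const, hcardin, nsmul_eq_mul, hcdef, hdm, hqq]
    field_simp
    try ring
  -- opposite block
  have hBiff : ∀ z : ZMod d, ((z - b).val < m ↔ ¬ (z - a).val < m) := by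
    intro z
    have hmval : ((m : ℕ) : ZMod d).val = m := ZMod.val_natCast_of_lt hmd
    have hneg : -((m:ℕ) : ZMod d) = ((m:ℕ) : ZMod d) := by
      have h0 : ((m:ℕ) : ZMod d) + ((m:ℕ) : ZMod d) = 0 := by
        rw [← Nat.cast_add, hm2]
        exact ZMod.natCast_self d
      exact (neg_eq_of_add_eq_zero_left h0)
    have hzb : z - b = (z - a) + ((m:ℕ) : ZMod d) := by
      rw [hb, sub_add_eq_sub_sub, sub_eq_add_neg (z - a), hneg]
    rw [hzb, ZMod.val_add, hmval]
    have hw : (z - a).val < d := ZMod.val_lt _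
    rcases Nat.lt_or_ge ((z - a).val) m with h | h
    · rw [Nat.mod_eq_of_lt (by omega)]
      omega
    · have h1 : ((z - a).val + m) % d = ((z - a).val + m - d) % d :=
        Nat.mod_eq_sub_mod (by omega)
      rw [h1, Nat.mod_eq_of_lt (by omega)]
      omega
  have hWb : ∀ z, W b z = if (z - a).val < m then c else lam * c := by
    intro z
    rw [hW b z]
    by_cases h : (z - a).val < m
    · rw [if_neg (by rw [hBiff]; exact not_not_intro h), if_pos h]
    · rw [if_pos ((hBiff z).mpr h), if_neg h, hcdef]
      ring
  have hmemH : ∀ N : ZMod d → ℕ, (N ∈ H ↔ ∑ y, N y = n) := by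
    intro N
    rw [hH, mem_filter, Fintype.mem_piFinset]
    simp only [mem_range]
    constructor
    · rintro ⟨-, h⟩; exact h
    · intro h
      refine ⟨fun y => ?_, h⟩
      have := Finset.single_le_sum (f := N) (fun i _ => Nat.zero_le _) (mem_univ y)
      omega
  have hWpos : ∀ y, 0 < W a y := by
    intro y; rw [hWa]; split
    · positivity
    · exact hc
  have hPpos : ∀ N, 0 < P N := by
    intro N
    rw [hP N]
    have h1 : (0:ℝ) < (∏ y, Nat.factorial (N y) : ℕ) := by
      exact_mod_cast Finset.prod_pos fun y _ => Nat.factorial_pos _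
    have h2 : (0:ℝ) < ∏ y, (W a y) ^ (N y) :=
      Finset.prod_pos fun y _ => pow_pos (hWpos y) _
    have h3 : (0:ℝ) < (Nat.factorial n : ℝ) := by exact_mod_cast Nat.factorial_pos n
    exact mul_pos (div_pos h3 h1) h2
  -- sums over blocks of N
  have hsplitN : ∀ N : ZMod d → ℕ,
      ∑ y ∈ univ.filter (fun y : ZMod d => (y - a).val < m), N y + K N = ∑ y, N y := by
    intro N
    rw [hK]
    exact Finset.sum_filter_add_sum_filter_not univ _ N
  -- core: Q N = P N * ratio
  have hQP : ∀ N : ZMod d → ℕ, (∑ y, N y = n) →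
      Q N = P N * (lam⁻¹ + ((K N : ℝ) / n) * (lam - lam⁻¹)) := by
    intro N hNsum
    have hn0 : ((n:ℝ)) ≠ 0 := by positivity
    have hterm : ∀ z : ZMod d, (W b z * (if N z = 0 then 0 else
        (Nat.factorial (n - 1) : ℝ) /
          (((Nat.factorial (N z - 1) * ∏ y ∈ Finset.univ.erase z, Nat.factorial (N y)) : ℕ) : ℝ) *
          (W a z) ^ (N z - 1) * ∏ y ∈ Finset.univ.erase z, (W a y) ^ (N y)))
        = W b z / W a z * ((N z : ℝ) / n) * P N := by
      intro z
      by_cases h0 : N z = 0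
      · simp [h0]
      · rw [if_neg h0, hP N]
        have hfn : ((n:ℝ)) * (Nat.factorial (n - 1) : ℝ) = (Nat.factorial n : ℝ) := by
          exact_mod_cast Nat.mul_factorial_pred (by omega)
        have hfz : ((N z : ℝ)) * (Nat.factorial (N z - 1) : ℝ) = (Nat.factorial (N z) : ℝ) := by
          exact_mod_cast Nat.mul_factorial_pred h0
        have hprodfac : (∏ y, Nat.factorial (N y)) =
            Nat.factorial (N z) * ∏ y ∈ univ.erase z, Nat.factorial (N y) :=
          (Finset.mul_prod_erase univ _ (mem_univ z)).symm
        have hprodW : (∏ y, (W a y) ^ (N y)) =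
            (W a z) ^ (N z) * ∏ y ∈ univ.erase z, (W a y) ^ (N y) :=
          (Finset.mul_prod_erase univ _ (mem_univ z)).symm
        have hpw : (W a z) ^ (N z) = (W a z) ^ (N z - 1) * W a z := by
          conv_lhs => rw [show N z = (N z - 1) + 1 from by omega]
          rw [pow_succ]
        rw [hprodfac, hprodW, hpw]
        have hWz : W a z ≠ 0 := ne_of_gt (hWpos z)
        have hNz : ((N z : ℝ)) ≠ 0 := by exact_mod_cast h0
        have hf1 : ((Nat.factorial (N z - 1) : ℕ) : ℝ) ≠ 0 := by
          exact_mod_cast (Nat.factorial_pos _).ne'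
        have hf2 : ((∏ y ∈ univ.erase z, Nat.factorial (N y) : ℕ) : ℝ) ≠ 0 := by
          exact_mod_cast (Finset.prod_pos fun y _ => Nat.factorial_pos _).ne'
        push_cast
        rw [← hfn, ← hfz]
        push_cast
        field_simp
    rw [hQ N, Finset.sum_congr rfl (fun z _ => hterm z)]
    have hsum2 : ∀ z ∈ univ.filter (fun z : ZMod d => (z - a).val < m),
        W b z / W a z * ((N z : ℝ) / n) * P N = (N z : ℝ) * (lam⁻¹ * (P N / n)) := by
      intro z hz
      have hz' := (mem_filter.mp hz).2
      rw [hWb z, hWa z, if_pos hz', if_pos hz']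
      have : c / (lam * c) = lam⁻¹ := by
        rw [div_eq_iff (by positivity)]
        field_simp
      rw [this]; ring
    have hsum3 : ∀ z ∈ univ.filter (fun z : ZMod d => ¬ (z - a).val < m),
        W b z / W a z * ((N z : ℝ) / n) * P N = (N z : ℝ) * (lam * (P N / n)) := by
      intro z hz
      have hz' := (mem_filter.mp hz).2
      rw [hWb z, hWa z, if_neg hz', if_neg hz']
      have : lam * c / c = lam := by field_simp
      rw [this]; ring
    rw [← Finset.sum_filter_add_sum_filter_not univ (fun z : ZMod d => (z - a).val < m)
        (fun z => W b z / W a z * ((N z : ℝ) / n) * P N),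
      Finset.sum_congr rfl hsum2, Finset.sum_congr rfl hsum3, ← Finset.sum_mul, ← Finset.sum_mul]
    have hKn : ((∑ y ∈ univ.filter (fun y : ZMod d => (y - a).val < m), N y : ℕ) : ℝ)
        = (n : ℝ) - (K N : ℝ) := by
      have := hsplitN N
      rw [hNsum] at this
      have h2 : (∑ y ∈ univ.filter (fun y : ZMod d => (y - a).val < m), N y) = n - K N := by omega
      rw [h2]
      have h3 : K N ≤ n := by omega
      push_cast [h3]
      ring
    rw [← Nat.cast_sum, ← Nat.cast_sum, hKn, ← hK N]
    field_simp
    ring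
  have hKle : ∀ N : ZMod d → ℕ, (∑ y, N y = n) → K N ≤ n := by
    intro N hNs
    have := hsplitN N
    omega
  -- part (i)
  have hpartI : ∀ k ≤ n, ∑ N ∈ H.filter (fun N => K N = k), P N
      = (n.choose k : ℝ) * qq ^ k * (1 - qq) ^ (n - k) := by
    intro k hk
    set Sout : Finset (ZMod d) := univ.filter (fun y : ZMod d => ¬ (y - a).val < m) with hSoutdef
    set Sin : Finset (ZMod d) := univ.filter (fun y : ZMod d => (y - a).val < m) with hSindef
    have hAid : ∑ f ∈ Sout.piAntidiag k,
        (Nat.multinomial Sout f : ℝ) * ∏ y ∈ Sout, W a y ^ f y = qq ^ k := by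
      rw [← Finset.sum_pow_eq_sum_piAntidiag, hsumout]
    have hBid : ∑ f ∈ Sin.piAntidiag (n - k),
        (Nat.multinomial Sin f : ℝ) * ∏ y ∈ Sin, W a y ^ f y = (1 - qq) ^ (n - k) := by
      rw [← Finset.sum_pow_eq_sum_piAntidiag, hsumin]
    have hmain : ∑ N ∈ H.filter (fun N => K N = k), P N
        = ∑ p ∈ (Sout.piAntidiag k) ×ˢ (Sin.piAntidiag (n - k)),
            (n.choose k : ℝ) *
              (((Nat.multinomial Sout p.1 : ℕ) : ℝ) * ∏ y ∈ Sout, W a y ^ p.1 y) *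
              (((Nat.multinomial Sin p.2 : ℕ) : ℝ) * ∏ y ∈ Sin, W a y ^ p.2 y) := by
      refine Finset.sum_nbij'
        (i := fun N => ((fun y => if ¬ (y - a).val < m then N y else 0),
                        (fun y => if (y - a).val < m then N y else 0)))
        (j := fun p => fun y => p.1 y + p.2 y) ?_ ?_ ?_ ?_ ?_
      · -- maps to
        intro N hN
        obtain ⟨hNH, hNk⟩ := mem_filter.mp hN
        have hNsum := (hmemH N).mp hNH
        have hKN : ∑ y ∈ Sout, N y = k := by rw [← hK N]; exact hNk
        have hIN : ∑ y ∈ Sin, N y = n - k := by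
          have := hsplitN N
          omega
        rw [Finset.mem_product]
        constructor
        · rw [Finset.mem_piAntidiag]
          constructor
          · rw [← hKN]
            apply Finset.sum_congr rfl
            intro y hy
            simp [(mem_filter.mp hy).2]
          · intro y hy
            simp only [ne_eq, ite_eq_right_iff, not_forall] at hy
            exact mem_filter.mpr ⟨mem_univ y, hy.1⟩
        · rw [Finset.mem_piAntidiag]
          constructor
          · rw [← hIN]
            apply Finset.sum_congr rfl
            intro y hy
            simp [(mem_filter.mp hy).2]
          · intro y hy
            simp only [ne_eq, ite_eq_right_iff, not_forall] at hy
            exact mem_filter.mpr ⟨mem_univ y, hy.1⟩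
      · -- maps back
        intro p hp
        rw [Finset.mem_product] at hp
        obtain ⟨h1, h2⟩ := hp
        rw [Finset.mem_piAntidiag] at h1 h2
        have hs1 : ∑ y, p.1 y = k := by
          rw [← h1.1]
          exact (Finset.sum_subset (Finset.subset_univ _)
            (fun y _ hy => by_contra fun h => hy (h1.2 y h))).symm
        have hs2 : ∑ y, p.2 y = n - k := by
          rw [← h2.1]
          exact (Finset.sum_subset (Finset.subset_univ _)
            (fun y _ hy => by_contra fun h => hy (h2.2 y h))).symm
        have hsum : ∑ y, (p.1 y + p.2 y) = n := by
          rw [Finset.sum_add_distrib, hs1, hs2]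
          omega
        rw [mem_filter]
        refine ⟨(hmemH _).mpr hsum, ?_⟩
        rw [hK]
        have : ∀ y ∈ Sout, p.1 y + p.2 y = p.1 y := by
          intro y hy
          have hy' := (mem_filter.mp hy).2
          have : p.2 y = 0 := by
            by_contra h
            exact hy' (mem_filter.mp (h2.2 y h)).2
          omega
        rw [Finset.sum_congr rfl this, h1.1]
      · -- left inverse
        intro N _
        funext y
        by_cases h : (y - a).val < m <;> simp [h]
      · -- right inverse
        intro p hp
        rw [Finset.mem_product] at hp
        obtain ⟨h1, h2⟩ := hp
        rw [Finset.mem_piAntidiag] at h1 h2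
        have hp1 : ∀ y : ZMod d, (y - a).val < m → p.1 y = 0 := by
          intro y hy
          by_contra h
          exact (mem_filter.mp (h1.2 y h)).2 hy
        have hp2 : ∀ y : ZMod d, ¬ (y - a).val < m → p.2 y = 0 := by
          intro y hy
          by_contra h
          exact hy (mem_filter.mp (h2.2 y h)).2
        refine Prod.ext ?_ ?_ <;> funext y <;> by_cases h : (y - a).val < m <;>
          simp [h, hp1, hp2]
      · -- summand equality
        intro N hN
        obtain ⟨hNH, hNk⟩ := mem_filter.mp hN
        have hNsum := (hmemH N).mp hNH
        have hKN : ∑ y ∈ Sout, N y = k := by rw [← hK N]; exact hNk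
        have hIN : ∑ y ∈ Sin, N y = n - k := by
          have := hsplitN N
          omega
        simp only
        have hc1 : Nat.multinomial Sout (fun y => if ¬ (y - a).val < m then N y else 0)
            = Nat.multinomial Sout N :=
          Nat.multinomial_congr fun y hy => by rw [if_pos (mem_filter.mp hy).2]
        have hc2 : Nat.multinomial Sin (fun y => if (y - a).val < m then N y else 0)
            = Nat.multinomial Sin N :=
          Nat.multinomial_congr fun y hy => by rw [if_pos (mem_filter.mp hy).2]
        have hc3 : ∏ y ∈ Sout, W a y ^ (if ¬ (y - a).val < m then N y else 0)
            = ∏ y ∈ Sout, W a y ^ N y :=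
          Finset.prod_congr rfl fun y hy => by rw [if_pos (mem_filter.mp hy).2]
        have hc4 : ∏ y ∈ Sin, W a y ^ (if (y - a).val < m then N y else 0)
            = ∏ y ∈ Sin, W a y ^ N y :=
          Finset.prod_congr rfl fun y hy => by rw [if_pos (mem_filter.mp hy).2]
        rw [hc1, hc2, hc3, hc4, hP N]
        -- factorial identities
        have hPoutne : ((∏ y ∈ Sout, Nat.factorial (N y) : ℕ) : ℝ) ≠ 0 := by
          exact_mod_cast (Finset.prod_pos fun y _ => Nat.factorial_pos _).ne'
        have hPinne : ((∏ y ∈ Sin, Nat.factorial (N y) : ℕ) : ℝ) ≠ 0 := by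
          exact_mod_cast (Finset.prod_pos fun y _ => Nat.factorial_pos _).ne'
        have e1 : (Nat.multinomial Sout N : ℝ)
            = (Nat.factorial k : ℝ) / ((∏ y ∈ Sout, Nat.factorial (N y) : ℕ) : ℝ) := by
          rw [eq_div_iff hPoutne, mul_comm]
          exact_mod_cast congrArg (Nat.cast (R := ℝ))
            (by rw [Nat.multinomial_spec, hKN] :
              (∏ y ∈ Sout, Nat.factorial (N y)) * Nat.multinomial Sout N = Nat.factorial k)
        have e2 : (Nat.multinomial Sin N : ℝ)
            = (Nat.factorial (n - k) : ℝ) / ((∏ y ∈ Sin, Nat.factorial (N y) : ℕ) : ℝ) := by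
          rw [eq_div_iff hPinne, mul_comm]
          exact_mod_cast congrArg (Nat.cast (R := ℝ))
            (by rw [Nat.multinomial_spec, hIN] :
              (∏ y ∈ Sin, Nat.factorial (N y)) * Nat.multinomial Sin N = Nat.factorial (n - k))
        have e3 : ((n.choose k : ℕ) : ℝ) * (Nat.factorial k : ℝ) * (Nat.factorial (n - k) : ℝ)
            = (Nat.factorial n : ℝ) := by
          exact_mod_cast congrArg (Nat.cast (R := ℝ)) (Nat.choose_mul_factorial_mul_factorial hk)
        have e4 : (∏ y, Nat.factorial (N y))
            = (∏ y ∈ Sin, Nat.factorial (N y)) * (∏ y ∈ Sout, Nat.factorial (N y)) :=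
          (Finset.prod_filter_mul_prod_filter_not univ _ _).symm
        have e5 : (∏ y, W a y ^ N y)
            = (∏ y ∈ Sin, W a y ^ N y) * (∏ y ∈ Sout, W a y ^ N y) :=
          (Finset.prod_filter_mul_prod_filter_not univ _ _).symm
        rw [e1, e2, e4, e5]
        push_cast
        rw [← e3]
        field_simp
    rw [hmain, Finset.sum_product]
    rw [mul_assoc, ← hAid, ← hBid, Finset.sum_mul_sum, Finset.mul_sum]
    refine Finset.sum_congr rfl fun x hx => ?_
    rw [Finset.mul_sum]
    refine Finset.sum_congr rfl fun y hy => ?_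
    ring
  refine ⟨hpartI, ?_, ?_⟩
  · -- part (ii)
    intro N hN
    rw [hQP N ((hmemH N).mp hN), mul_comm, mul_div_assoc, div_self (ne_of_gt (hPpos N)), mul_one]
  · -- part (iii)
    intro ε hε
    have hmaps : ∀ N ∈ H, K N ∈ Finset.range (n + 1) := by
      intro N hN
      rw [Finset.mem_range]
      have := hKle N ((hmemH N).mp hN)
      omega
    rw [← Finset.sum_fiberwise_of_maps_to hmaps (fun N => max (Q N - Real.exp ε * P N) 0)]
    refine Finset.sum_congr rfl fun k hk => ?_
    have hk' : k ≤ n := by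
      rw [Finset.mem_range] at hk
      omega
    have hstep : ∀ N ∈ H.filter (fun N => K N = k),
        max (Q N - Real.exp ε * P N) 0
          = P N * max (lam⁻¹ + ((k : ℝ) / n) * (lam - lam⁻¹) - Real.exp ε) 0 := by
      intro N hN
      obtain ⟨hNH, hNk⟩ := mem_filter.mp hN
      rw [hQP N ((hmemH N).mp hNH), hNk]
      have h1 : P N * (lam⁻¹ + ((k : ℝ) / n) * (lam - lam⁻¹)) - Real.exp ε * P N
          = P N * ((lam⁻¹ + ((k : ℝ) / n) * (lam - lam⁻¹)) - Real.exp ε) := by ring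
      rw [h1, mul_max_of_nonneg _ _ (le_of_lt (hPpos N)), mul_zero]
    rw [Finset.sum_congr rfl hstep, ← Finset.sum_mul, hpartI k hk']
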